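/- The following are equivalent for A ∈ 2^ℕ: (1) there is a set B with A ≤_{T(tu)} B; (2) A is anti-complex; (3) g_A dominates every computable function; (4) A ≤_{uT(tu)} A*. -/

import Mathlib

open scoped Classical
open Filter

/-- The prefix of length `n` of a set (element of Cantor space), as a binary string. -/
def opre (B : ℕ → Bool) (n : ℕ) : List Bool := (List.range n).map B

/-- An order function: computable, nondecreasing and unbounded. -/
def IsOrder (f : ℕ → ℕ) : Prop := Computable f ∧ Monotone f ∧ ∀ m, ∃ n, m ≤ f n

/-- The discrete inverse of a nondecreasing unbounded function:
`discInv f k` is the greatest `n` with `f n ≤ k`. -/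
noncomputable def discInv (f : ℕ → ℕ) (k : ℕ) : ℕ := sSup {n | f n ≤ k}

/-- There is a Turing reduction computing the function `f` from the set oracle `B`
whose use on input `n` is bounded by `u n`: a monotone partial computable
string functional which computes `f n` from the prefix `B↾(u n)`. -/
def RedUse (f : ℕ → ℕ) (B : ℕ → Bool) (u : ℕ → ℕ) : Prop :=
  ∃ F : List Bool → ℕ →. ℕ, Partrec₂ F ∧
    (∀ (σ τ : List Bool) (n y : ℕ), σ <+: τ → y ∈ F σ n → y ∈ F τ n) ∧
    ∀ n, f n ∈ F (opre B (u n)) n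

/-- A set, viewed as a `ℕ`-valued function. -/
def natOf (A : ℕ → Bool) : ℕ → ℕ := fun n => cond (A n) 1 0

/-- Turing reduction of the set `A` to the set `B` with use bounded by `u`. -/
def SRedUse (A B : ℕ → Bool) (u : ℕ → ℕ) : Prop := RedUse (natOf A) B u

/-- Turing reducibility of a function to a set. -/
def TRed (f : ℕ → ℕ) (B : ℕ → Bool) : Prop := ∃ u, RedUse f B u

/-- Weak truth-table reducibility of a function to a set: the use is computably bounded. -/
def WttRed (f : ℕ → ℕ) (B : ℕ → Bool) : Prop := ∃ u, Computable u ∧ RedUse f B u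

/-- Weak truth-table reducibility between sets. -/
def SWttRed (A B : ℕ → Bool) : Prop := WttRed (natOf A) B

/-- `A` is reducible to `B` with tiny use: for every order function `h` there is
a Turing reduction of `A` to `B` with use bounded by `h`. -/
def TtuRed (A B : ℕ → Bool) : Prop := ∀ h, IsOrder h → SRedUse A B h

/-- `A` is uniformly reducible to `B` with tiny use: a single Turing reduction of
`A` to `B` whose use function is dominated by every order function. -/
def UTtuRed (A B : ℕ → Bool) : Prop :=
  ∃ u : ℕ → ℕ, (∀ h, IsOrder h → ∀ᶠ n in atTop, u n ≤ h n) ∧ SRedUse A B u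

/-- The effective join of two sets. -/
def join (A B : ℕ → Bool) : ℕ → Bool := fun n => if n % 2 = 0 then A (n / 2) else B (n / 2)

/-- The halting set `K = {e : φ_e(e)↓}`. -/
noncomputable def Khalt : ℕ → Bool := fun e =>
  decide (((Denumerable.ofNat Nat.Partrec.Code e).eval e).Dom)

/-- `U` is an optimal machine (for plain Kolmogorov complexity on binary strings). -/
def Optimal (U : List Bool →. List Bool) : Prop :=
  Partrec U ∧ ∀ M : List Bool →. List Bool, Partrec M →
    ∃ c, ∀ (p x : List Bool), x ∈ M p → ∃ q : List Bool, q.length ≤ p.length + c ∧ x ∈ U q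

/-- Plain Kolmogorov complexity of a string relative to the machine `U`. -/
noncomputable def Cplx (U : List Bool →. List Bool) (x : List Bool) : ℕ :=
  sInf { k | ∃ p : List Bool, p.length = k ∧ x ∈ U p }

/-- Kolmogorov complexity of a natural number (coded as a binary string). -/
noncomputable def CplxN (U : List Bool →. List Bool) (n : ℕ) : ℕ := Cplx U (Nat.bits n)

/-- `A` is anti-complex: for every order function `f`, `C(A↾f(n)) ≤ n` for almost all `n`. -/
def AntiComplex (U : List Bool →. List Bool) (A : ℕ → Bool) : Prop :=
  ∀ f, IsOrder f → ∀ᶠ n in atTop, Cplx U (opre A (f n)) ≤ n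

/-- `g_A(k)` is the least `n` such that `C(A↾m) > k` for all `m ≥ n`. -/
noncomputable def gA (U : List Bool →. List Bool) (A : ℕ → Bool) (k : ℕ) : ℕ :=
  sInf {n | ∀ m, n ≤ m → k < Cplx U (opre A m)}

/-- Coding of binary strings by natural numbers, ordered by length first. -/
def strToNat (l : List Bool) : ℕ := l.foldl (fun a b => 2 * a + cond b 1 0) 1 - 1

/-- The least `U`-description of the string `x`, as a natural number. -/
noncomputable def leastDesc (U : List Bool →. List Bool) (x : List Bool) : ℕ :=
  sInf {m | ∃ p : List Bool, strToNat p = m ∧ x ∈ U p}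

/-- The set `A* = {(A↾g_A(k))* : k ∈ ℕ}` of least descriptions of the segments `A↾g_A(k)`. -/
noncomputable def Astar (U : List Bool →. List Bool) (A : ℕ → Bool) : ℕ → Bool :=
  fun m => decide (∃ k, m = leastDesc U (opre A (gA U A k)))

/-- A c.e. trace for `f` bounded by `h`: a uniformly c.e. sequence of finite sets
`T n` with `f n ∈ T n` and `|T n| ≤ h n`. -/
def CeTrace (h f : ℕ → ℕ) : Prop :=
  ∃ S : ℕ → ℕ → Prop, REPred (fun p : ℕ × ℕ => S p.1 p.2) ∧
    ∀ n, S n (f n) ∧ { y | S n y }.Finite ∧ Set.ncard { y | S n y } ≤ h n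

/-- The wtt-degree of `A` is r.e. traceable. -/
def ReTraceableWtt (A : ℕ → Bool) : Prop :=
  ∃ h, IsOrder h ∧ ∀ f : ℕ → ℕ, WttRed f A → CeTrace h f

/-- A computable trace for `f` bounded by `h` (finite sets given by canonical indices,
here: by computable lists). -/
def CompTrace (h f : ℕ → ℕ) : Prop :=
  ∃ T : ℕ → List ℕ, Computable T ∧ ∀ n, f n ∈ T n ∧ (T n).length ≤ h n

/-- Truth-table reducibility of a function to a set: a total computable functional
with computably bounded use. -/
def TtRed (f : ℕ → ℕ) (A : ℕ → Bool) : Prop :=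
  ∃ u : ℕ → ℕ, Computable u ∧ ∃ F : List Bool → ℕ → ℕ, Computable₂ F ∧
    ∀ n, F (opre A (u n)) n = f n

/-- `A` is Schnorr trivial (via the Franklin–Stephan characterisation:
its truth-table degree is computably traceable). -/
def SchnorrTrivial (A : ℕ → Bool) : Prop :=
  ∃ h, IsOrder h ∧ ∀ f : ℕ → ℕ, TtRed f A → CompTrace h f

/-- `A` is truth-table reducible to `B` with tiny use: for every order function `h`
there is a total computable functional computing `A` from `B` with use bounded by `h`. -/
def TttuRed (A B : ℕ → Bool) : Prop :=
  ∀ h, IsOrder h → ∃ F : List Bool → ℕ → Bool, Computable₂ F ∧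
    ∀ n, F (opre B (h n)) n = A n

/-- `g` dominates every computable function. -/
def Dominant (g : ℕ → ℕ) : Prop :=
  ∀ f : ℕ → ℕ, Computable f → ∀ᶠ n in atTop, f n ≤ g n

/-- Prefix of a function oracle. -/
def fpre (f : ℕ → ℕ) (n : ℕ) : List ℕ := (List.range n).map f

/-- Reduction of a set `A` to a function oracle `f` with use bounded by `u`. -/
def RedUseFn (A : ℕ → Bool) (f : ℕ → ℕ) (u : ℕ → ℕ) : Prop :=
  ∃ F : List ℕ → ℕ →. ℕ, Partrec₂ F ∧
    (∀ (σ τ : List ℕ) (n y : ℕ), σ <+: τ → y ∈ F σ n → y ∈ F τ n) ∧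
    ∀ n, natOf A n ∈ F (fpre f (u n)) n

/-- Uniform reducibility with tiny use to a function oracle. -/
def UTtuRedFn (A : ℕ → Bool) (f : ℕ → ℕ) : Prop :=
  ∃ u : ℕ → ℕ, (∀ h, IsOrder h → ∀ᶠ n in atTop, u n ≤ h n) ∧ RedUseFn A f u

/-- The graph of `f`, coded as a set via the standard pairing. -/
def graphOf (f : ℕ → ℕ) : ℕ → Bool :=
  fun m => decide (f (Nat.unpair m).1 = (Nat.unpair m).2)

/-- The real number with binary expansion `X`. -/
noncomputable def realOf (X : ℕ → Bool) : ℝ := ∑' n, cond (X n) (((2:ℝ) ^ (n + 1))⁻¹) 0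

/-- `X` is a left-c.e. real. -/
def LeftCE (X : ℕ → Bool) : Prop :=
  ∃ q : ℕ → ℚ, Computable q ∧ Monotone q ∧
    Tendsto (fun n => (q n : ℝ)) atTop (nhds (realOf X))

/-- `X` is Martin-Löf random: it passes every Martin-Löf test (given as a uniformly
c.e. sequence of sets of strings of measure at most `2^{-n}`). -/
def MLRandom (X : ℕ → Bool) : Prop :=
  ∀ W : ℕ → List Bool → Prop,
    REPred (fun p : ℕ × List Bool => W p.1 p.2) →
    (∀ n, ∑' σ : {σ : List Bool // W n σ}, ((2:ℝ) ^ (σ : List Bool).length)⁻¹ ≤ ((2:ℝ) ^ n)⁻¹) →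
    ∃ n, ∀ σ, W n σ → opre X σ.length ≠ σ

/-- `A` is a c.e. set. -/
def CeSet (A : ℕ → Bool) : Prop := REPred (fun n => A n = true)


lemma opre_length (B : ℕ → Bool) (n : ℕ) : (opre B n).length = n := by simp [opre]

lemma opre_prefix (B : ℕ → Bool) {m n : ℕ} (h : m ≤ n) : opre B m <+: opre B n := by
  have : opre B m = (opre B n).take m := by
    simp [opre, ← List.map_take, List.take_range, h]
  rw [this]; exact List.take_prefix _ _

lemma opre_getD (B : ℕ → Bool) {m n : ℕ} (h : m < n) : (opre B n).getD m false = B m := by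
  simp [opre, List.getD, List.getElem?_map, List.getElem?_range h]

lemma opre_succ (B : ℕ → Bool) (n : ℕ) : opre B (n+1) = opre B n ++ [B n] := by
  simp [opre, List.range_succ]

def toBits : ℕ → List Bool
  | 0 => []
  | (n+1) => decide ((n+1) % 2 = 1) :: toBits ((n+1)/2)
  decreasing_by exact Nat.div_lt_self (Nat.succ_pos n) one_lt_two

lemma toBits_pos {n : ℕ} (h : n ≠ 0) : toBits n = decide (n % 2 = 1) :: toBits (n/2) := by
  obtain ⟨m, rfl⟩ := Nat.exists_eq_succ_of_ne_zero h
  rw [toBits]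

lemma toBits_bit (b : Bool) {a : ℕ} (ha : 1 ≤ a) :
    toBits (2*a + cond b 1 0) = b :: toBits a := by
  have h2 : 2*a + cond b 1 0 ≠ 0 := by cases b <;> simp <;> omega
  rw [toBits_pos h2]
  congr 1
  · cases b <;> simp <;> omega
  · congr 1; cases b <;> simp <;> omega

def ofBits (l : List Bool) : ℕ := l.foldr (fun b a => 2*a + cond b 1 0) 0

@[simp] lemma toBits_zero : toBits 0 = [] := by rw [toBits]

lemma ofBits_toBits : ∀ n, ofBits (toBits n) = n := by
  intro n
  induction n using Nat.strong_induction_on with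
  | _ n ih =>
    rcases Nat.eq_zero_or_pos n with rfl | hn
    · simp [ofBits]
    · rw [toBits_pos hn.ne']
      have := ih (n/2) (Nat.div_lt_self hn one_lt_two)
      simp only [ofBits, List.foldr_cons] at *
      rw [this]
      rcases Nat.mod_two_eq_zero_or_one n with h | h <;> simp [h] <;> omega

lemma two_pow_toBits_length_le : ∀ n, 1 ≤ n → 2 ^ (toBits n).length ≤ 2 * n := by
  intro n
  induction n using Nat.strong_induction_on with
  | _ n ih =>
    intro hn
    rcases eq_or_lt_of_le hn with h | h
    · subst h; rw [toBits_pos (by omega)]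
      simp
    · rw [toBits_pos (by omega)]
      have h2 : 1 ≤ n / 2 := by omega
      have := ih (n/2) (Nat.div_lt_self (by omega) one_lt_two) h2
      calc 2 ^ (toBits (n/2)).length.succ = 2 * 2 ^ (toBits (n/2)).length := by
            rw [pow_succ]; ring
        _ ≤ 2 * (2 * (n/2)) := by omega
        _ ≤ 2 * n := by omega


lemma foldl_ge : ∀ (p : List Bool) (a : ℕ), a ≤ p.foldl (fun a b => 2 * a + cond b 1 0) a := by
  intro p
  induction p with
  | nil => intro a; simp
  | cons b t ih =>
    intro a
    calc a ≤ 2*a + cond b 1 0 := by cases b <;> simp <;> omega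
      _ ≤ _ := ih _

lemma foldl_lt : ∀ (p : List Bool) (a : ℕ),
    p.foldl (fun a b => 2 * a + cond b 1 0) a < 2 ^ p.length * (a + 1) := by
  intro p
  induction p with
  | nil => intro a; simp
  | cons b t ih =>
    intro a
    have := ih (2*a + cond b 1 0)
    calc List.foldl _ (2*a + cond b 1 0) t < 2 ^ t.length * (2*a + cond b 1 0 + 1) := this
      _ ≤ 2 ^ t.length * (2 * (a+1)) := by
          have : cond b 1 0 ≤ 1 := by cases b <;> simp
          exact Nat.mul_le_mul_left _ (by omega)
      _ = 2 ^ (b :: t).length * (a + 1) := by simp [pow_succ]; ring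

lemma strToNat_add_one (p : List Bool) :
    strToNat p + 1 = p.foldl (fun a b => 2 * a + cond b 1 0) 1 := by
  have := foldl_ge p 1
  simp [strToNat]; omega

lemma strToNat_lt (p : List Bool) : strToNat p + 1 < 2 ^ (p.length + 1) := by
  rw [strToNat_add_one]
  have := foldl_lt p 1
  calc p.foldl _ 1 < 2 ^ p.length * 2 := this
    _ = 2 ^ (p.length + 1) := by ring

lemma toBits_foldl : ∀ (p : List Bool) (a : ℕ), 1 ≤ a →
    toBits (p.foldl (fun a b => 2 * a + cond b 1 0) a) = p.reverse ++ toBits a := by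
  intro p
  induction p with
  | nil => intro a _; simp
  | cons b t ih =>
    intro a ha
    have h1 : 1 ≤ 2*a + cond b 1 0 := by omega
    simp only [List.foldl_cons, List.reverse_cons]
    rw [ih _ h1, toBits_bit b ha]
    simp


def natDecode (m : ℕ) : List Bool := ((toBits (m+1)).dropLast).reverse

lemma natDecode_strToNat (p : List Bool) : natDecode (strToNat p) = p := by
  unfold natDecode
  rw [strToNat_add_one, toBits_foldl p 1 le_rfl]
  have h1 : toBits 1 = [true] := by rw [toBits_pos one_ne_zero]; simp
  rw [h1, List.dropLast_concat, List.reverse_reverse]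

lemma strToNat_injective : Function.Injective strToNat := by
  intro p q h
  have := natDecode_strToNat p
  rw [h, natDecode_strToNat] at this
  exact this.symm

lemma primrec_toBits : Primrec toBits := by
  have h := Primrec.nat_strong_rec (fun (_ : ℕ) n => toBits n)
    (g := fun (_ : ℕ) (l : List (List Bool)) =>
      if l.length = 0 then some [] else
        (l.getD (l.length / 2) []).cons (decide (l.length % 2 = 1)) |> some)
  have hg : Primrec₂ (fun (_ : ℕ) (l : List (List Bool)) =>
      if l.length = 0 then some [] else
        some ((l.getD (l.length / 2) []).cons (decide (l.length % 2 = 1)))) := by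
    apply Primrec.ite
    · exact Primrec.eq.comp (Primrec.list_length.comp Primrec.snd) (Primrec.const 0)
    · exact Primrec.const (some [])
    · apply Primrec.option_some.comp
      exact Primrec.list_cons.comp
        (Primrec.eq.comp
          (Primrec.nat_mod.comp (Primrec.list_length.comp Primrec.snd) (Primrec.const 2))
          (Primrec.const 1)).decide
        ((Primrec.list_getD []).comp (Primrec.snd)
          (Primrec.nat_div.comp (Primrec.list_length.comp Primrec.snd) (Primrec.const 2)))
  have H : ∀ (a n : ℕ), (fun (_ : ℕ) (l : List (List Bool)) =>
      if l.length = 0 then some [] else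
        some ((l.getD (l.length / 2) []).cons (decide (l.length % 2 = 1)))) a
        ((List.range n).map (fun n => toBits n)) = some (toBits n) := by
    intro a n
    rcases Nat.eq_zero_or_pos n with rfl | hn
    · simp
    · have hlen : ((List.range n).map (fun n => toBits n)).length = n := by simp
      simp only [hlen, if_neg hn.ne']
      have hget : ((List.range n).map (fun n => toBits n)).getD (n/2) [] = toBits (n/2) := by
        have h2 : n / 2 < n := Nat.div_lt_self hn one_lt_two
        simp [List.getD, List.getElem?_map, List.getElem?_range h2]
      rw [hget, toBits_pos hn.ne']
  have := h hg H
  exact this.comp (Primrec.const 0) Primrec.id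

lemma primrec_natDecode : Primrec natDecode :=
  Primrec.list_reverse.comp <|
    (Primrec.list_reverse.comp (Primrec.list_tail.comp (Primrec.list_reverse.comp
      (primrec_toBits.comp (Primrec.succ))))).of_eq
      (fun m => by
        rw [List.tail_reverse, List.reverse_reverse])


section CplxLemmas

variable {U : List Bool →. List Bool}

lemma exists_desc (hU : Optimal U) (x : List Bool) : ∃ p, x ∈ U p := by
  have hid : Partrec (fun p : List Bool => Part.some p) := Computable.id.partrec
  obtain ⟨c, hc⟩ := hU.2 _ hid
  obtain ⟨q, _, hq⟩ := hc x x (Part.mem_some x)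
  exact ⟨q, hq⟩

lemma cplx_spec (hU : Optimal U) (x : List Bool) : ∃ p : List Bool, p.length = Cplx U x ∧ x ∈ U p := by
  have hne : { k | ∃ p : List Bool, p.length = k ∧ x ∈ U p }.Nonempty := by
    obtain ⟨p, hp⟩ := exists_desc hU x
    exact ⟨p.length, p, rfl, hp⟩
  exact Nat.sInf_mem hne

lemma cplx_le {x : List Bool} {p : List Bool} (h : x ∈ U p) : Cplx U x ≤ p.length :=
  Nat.sInf_le ⟨p, rfl, h⟩

lemma machine_bound (hU : Optimal U) {M : List Bool →. List Bool} (hM : Partrec M) :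
    ∃ c, ∀ (p x : List Bool), x ∈ M p → Cplx U x ≤ p.length + c := by
  obtain ⟨c, hc⟩ := hU.2 M hM
  refine ⟨c, fun p x hx => ?_⟩
  obtain ⟨q, hq1, hq2⟩ := hc p x hx
  exact le_trans (cplx_le hq2) hq1

lemma leastDesc_spec (hU : Optimal U) (x : List Bool) :
    ∃ p : List Bool, strToNat p = leastDesc U x ∧ x ∈ U p := by
  have hne : {m | ∃ p : List Bool, strToNat p = m ∧ x ∈ U p}.Nonempty := by
    obtain ⟨p, hp⟩ := exists_desc hU x
    exact ⟨strToNat p, p, rfl, hp⟩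
  exact Nat.sInf_mem hne

lemma leastDesc_lt (hU : Optimal U) (x : List Bool) : leastDesc U x < 2 ^ (Cplx U x + 1) := by
  obtain ⟨p, hp, hpx⟩ := cplx_spec hU x
  have h1 : leastDesc U x ≤ strToNat p := Nat.sInf_le ⟨p, rfl, hpx⟩
  have h2 := strToNat_lt p
  rw [hp] at h2
  omega

lemma leastDesc_injective (hU : Optimal U) {x y : List Bool} (h : leastDesc U x = leastDesc U y) : x = y := by
  obtain ⟨p, hp, hpx⟩ := leastDesc_spec hU x
  obtain ⟨q, hq, hqy⟩ := leastDesc_spec hU y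
  have hpq : p = q := strToNat_injective (hp.trans (h.trans hq.symm))
  subst hpq
  exact Part.mem_unique hpx hqy

end CplxLemmas


section gALemmas

variable {U : List Bool →. List Bool} {A : ℕ → Bool}

lemma finite_compressible (hU : Optimal U) (A : ℕ → Bool) (k : ℕ) : {m | Cplx U (opre A m) ≤ k}.Finite := by
  have hinj : Function.Injective (fun m => leastDesc U (opre A m)) := by
    intro m m' h
    have := leastDesc_injective hU h
    have hl := congrArg List.length this
    simpa [opre_length] using hl
  have hsub : {m | Cplx U (opre A m) ≤ k} ⊆
      (fun m => leastDesc U (opre A m)) ⁻¹' (Set.Iio (2 ^ (k+1))) := by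
    intro m hm
    have hm' : Cplx U (opre A m) ≤ k := hm
    have h1 := leastDesc_lt hU (opre A m)
    have h2 : (2:ℕ) ^ (Cplx U (opre A m) + 1) ≤ 2 ^ (k+1) :=
      Nat.pow_le_pow_right (by norm_num) (by omega)
    exact lt_of_lt_of_le h1 h2
  exact Set.Finite.subset ((Set.finite_Iio _).preimage hinj.injOn) hsub

lemma gA_set_nonempty (hU : Optimal U) (A : ℕ → Bool) (k : ℕ) : {n | ∀ m, n ≤ m → k < Cplx U (opre A m)}.Nonempty := by
  obtain ⟨N, hN⟩ := (finite_compressible hU A k).bddAbove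
  refine ⟨N + 1, fun m hm => ?_⟩
  by_contra h
  push_neg at h
  have := hN h
  omega

lemma gA_mem (hU : Optimal U) (A : ℕ → Bool) (k : ℕ) : ∀ m, gA U A k ≤ m → k < Cplx U (opre A m) :=
  Nat.sInf_mem (gA_set_nonempty hU A k)

lemma gA_pred (hU : Optimal U) (A : ℕ → Bool) {k : ℕ} (h : gA U A k ≠ 0) : Cplx U (opre A (gA U A k - 1)) ≤ k := by
  have hlt : gA U A k - 1 < sInf {n | ∀ m, n ≤ m → k < Cplx U (opre A m)} := by
    have : gA U A k - 1 < gA U A k := by omega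
    exact this
  have hnm : ¬ ∀ m, gA U A k - 1 ≤ m → k < Cplx U (opre A m) := Nat.notMem_of_lt_sInf hlt
  push_neg at hnm
  obtain ⟨m, hm1, hm2⟩ := hnm
  rcases eq_or_lt_of_le hm1 with rfl | h2
  · exact hm2
  · exfalso
    have := gA_mem hU A k m (by omega)
    omega

lemma gA_mono (hU : Optimal U) (A : ℕ → Bool) : Monotone (gA U A) := by
  intro k k' hk
  apply Nat.sInf_le
  exact fun m hm => lt_of_le_of_lt hk (gA_mem hU A k' m hm)

lemma gA_unbounded (hU : Optimal U) (A : ℕ → Bool) (n : ℕ) : ∃ k, n < gA U A k := by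
  refine ⟨Cplx U (opre A n), ?_⟩
  by_contra h
  push_neg at h
  exact lt_irrefl _ (gA_mem hU A _ n h)

end gALemmas


lemma computable_least {p : ℕ → ℕ → Bool} (hp : Computable₂ p)
    (hex : ∀ a, ∃ n, p a n = true) :
    Computable fun a => Nat.find (hex a) := by
  have h1 : Partrec fun a => Nat.rfind (fun n => Part.some (p a n)) := by
    apply Partrec.rfind
    exact (Partrec.some.comp hp.partrec₂.to₂).to₂
  apply h1.of_eq_tot
  intro a
  apply Nat.mem_rfind.mpr
  constructor
  · simpa using Nat.find_spec (hex a)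
  · intro m hm
    have := Nat.find_min (hex a) hm
    simpa using Bool.eq_false_iff.mpr this

section Arc23

lemma arc23 {U : List Bool →. List Bool} (hU : Optimal U) (A : ℕ → Bool)
    (hac : AntiComplex U A) : Dominant (gA U A) := by
  intro f hf
  -- running maximum of f, plus n
  set maxf : ℕ → ℕ := fun n => Nat.rec (motive := fun _ => ℕ) (f 0)
    (fun m ih => max ih (f (m+1))) n with hmaxf
  have hmc : Computable maxf := by
    apply Computable.nat_rec (f := fun n : ℕ => n) (g := fun _ : ℕ => f 0)
      (h := fun (_ : ℕ) (p : ℕ × ℕ) => max p.2 (f (p.1 + 1)))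
    · exact Computable.id
    · exact (hf.comp (Computable.const 0)).comp (Computable.const 0) |>.of_eq (fun _ => rfl)
    · exact Computable₂.comp (Primrec.nat_max.to_comp)
        (Computable.snd.comp Computable.snd)
        (hf.comp (Computable.succ.comp (Computable.fst.comp Computable.snd)))
  have hle : ∀ n, f n ≤ maxf n := by
    intro n
    induction n with
    | zero => simp [hmaxf]
    | succ m _ => simp [hmaxf]
  have hmono : Monotone maxf := by
    apply monotone_nat_of_le_succ
    intro n
    simp [hmaxf]
  set F2 : ℕ → ℕ := fun n => n + maxf n with hF2
  have hord : IsOrder F2 := by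
    refine ⟨Primrec.nat_add.to_comp.comp Computable.id hmc, ?_, ?_⟩
    · intro a b hab
      exact Nat.add_le_add hab (hmono hab)
    · intro m; exact ⟨m, Nat.le_add_right _ _⟩
  have := hac F2 hord
  rw [Filter.eventually_atTop] at this ⊢
  obtain ⟨N, hN⟩ := this
  refine ⟨N, fun n hn => ?_⟩
  have hC := hN n hn
  -- gA U A n > F2 n
  have hgt : F2 n < gA U A n := by
    by_contra hcon
    push_neg at hcon
    have := gA_mem hU A n (F2 n) hcon
    omega
  calc f n ≤ maxf n := hle n
    _ ≤ F2 n := Nat.le_add_left _ _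
    _ ≤ gA U A n := le_of_lt hgt

end Arc23

section Arc41

lemma arc41 (A B : ℕ → Bool) (h4 : UTtuRed A B) : TtuRed A B := by
  obtain ⟨u, hdom, F, hF, hmono, hFA⟩ := h4
  intro h hord
  obtain ⟨N, hN⟩ := Filter.eventually_atTop.mp (hdom h hord)
  set tbl : List ℕ := (List.range N).map (natOf A) with htbl
  refine ⟨fun σ n => Sum.casesOn (if n < N then Sum.inl (tbl.getD n 0) else Sum.inr ())
    (fun v => Part.some v) (fun _ => F σ n), ?_, ?_, ?_⟩
  · apply Partrec.sumCasesOn_right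
      (f := fun p : List Bool × ℕ => if p.2 < N then Sum.inl (tbl.getD p.2 0) else Sum.inr ())
      (g := fun _ v => v) (h := fun p _ => F p.1 p.2)
    · have hc := Computable.cond (c := fun p : List Bool × ℕ => decide (p.2 < N))
        (f := fun p : List Bool × ℕ => (Sum.inl (tbl.getD p.2 0) : ℕ ⊕ Unit))
        (g := fun _ : List Bool × ℕ => (Sum.inr () : ℕ ⊕ Unit))
        ((Primrec.nat_lt.comp Primrec.snd (Primrec.const N)).decide.to_comp.of_eq (fun p => by simp))
        (Computable.sumInl.comp
          (((Primrec.list_getD 0).comp (Primrec.const tbl) Primrec.snd).to_comp))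
        (Computable.const _)
      exact hc.of_eq (fun p => by by_cases hp : p.2 < N <;> simp [hp])
    · exact Computable.snd
    · exact hF.comp (Computable.fst.comp Computable.fst) (Computable.snd.comp Computable.fst) |>.to₂
  · intro σ τ n y hpre hy
    by_cases hn : n < N
    · simpa [hn] using (by simpa [hn] using hy : y ∈ Part.some (tbl.getD n 0))
    · simp only [if_neg hn] at hy ⊢
      exact hmono σ τ n y hpre hy
  · intro n
    by_cases hn : n < N
    · simp only [if_pos hn]
      have : tbl.getD n 0 = natOf A n := by
        simp [htbl, List.getD, List.getElem?_map, List.getElem?_range hn]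
      show natOf A n ∈ Part.some (tbl.getD n 0)
      rw [this]; exact Part.mem_some _
    · simp only [if_neg hn]
      exact hmono _ _ n _ (opre_prefix B (hN n (by omega))) (hFA n)

end Arc41

section Arc12

open Nat.Partrec (Code)
open Nat.Partrec.Code

lemma exists_uniform_stage (c : Code) (g : ℕ → ℕ) (k : ℕ)
    (h : ∀ j < k, ∃ s, (evaln s c (g j)).isSome) :
    ∃ s, ∀ j < k, (evaln s c (g j)).isSome := by
  induction k with
  | zero => exact ⟨0, fun j hj => absurd hj (Nat.not_lt_zero j)⟩
  | succ k ih =>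
    obtain ⟨s₁, hs₁⟩ := ih (fun j hj => h j (Nat.lt_succ_of_lt hj))
    obtain ⟨s₂, hs₂⟩ := h k (Nat.lt_succ_self k)
    refine ⟨max s₁ s₂, fun j hj => ?_⟩
    rcases Nat.lt_succ_iff_lt_or_eq.mp hj with hj' | rfl
    · obtain ⟨y, hy⟩ := Option.isSome_iff_exists.mp (hs₁ j hj')
      exact Option.isSome_iff_exists.mpr ⟨y, evaln_mono (le_max_left _ _) hy⟩
    · obtain ⟨y, hy⟩ := Option.isSome_iff_exists.mp hs₂
      exact Option.isSome_iff_exists.mpr ⟨y, evaln_mono (le_max_right _ _) hy⟩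

lemma primrec_ofBits : Primrec ofBits := by
  have hh : Primrec₂ (fun (_ : List Bool) (p : Bool × ℕ) => 2 * p.2 + cond p.1 1 0) :=
    (Primrec.nat_add.comp (Primrec.nat_double.comp (Primrec.snd.comp Primrec.snd))
      (Primrec.cond (Primrec.fst.comp Primrec.snd) (Primrec.const 1) (Primrec.const 0)))
  have h := Primrec.list_foldr (f := @id (List Bool)) (g := fun _ => 0)
    (h := fun _ p => 2 * p.2 + cond p.1 1 0) Primrec.id (Primrec.const 0) hh
  exact h.of_eq (fun l => rfl)

lemma aux_pow : ∀ k, 5 ≤ k → 4 * k + 4 ≤ 2 ^ k := by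
  intro k hk
  induction k with
  | zero => omega
  | succ k ih =>
    rcases Nat.lt_or_ge k 5 with h | h
    · interval_cases k <;> simp_all <;> omega
    · have := ih (by omega)
      have h2 : 2 ^ (k+1) = 2 * 2 ^ k := by rw [pow_succ]; ring
      omega

lemma pair_le (a b : ℕ) : Nat.pair a b ≤ (a + b + 1) ^ 2 := by
  unfold Nat.pair
  split <;> nlinarith

lemma arc12 {U : List Bool →. List Bool} (hU : Optimal U) (A : ℕ → Bool)
    (h1 : ∃ B, TtuRed A B) : AntiComplex U A := by
  obtain ⟨B, hB⟩ := h1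
  intro f hford
  obtain ⟨hfc, hfmono, hfunb⟩ := hford
  -- the slow order function h'
  have hgex : ∀ m, ∃ n, decide (m ≤ f n) = true := by
    intro m; obtain ⟨n, hn⟩ := hfunb m; exact ⟨n, by simpa⟩
  set gfun : ℕ → ℕ := fun m => Nat.find (hgex m) with hgfun
  have hdec : Computable₂ (fun m n => decide (m ≤ f n)) := by
    have hle : Computable₂ fun (a b : ℕ) => decide (a ≤ b) := Primrec.nat_le.decide.to_comp
    exact (hle.comp Computable.fst (hfc.comp Computable.snd)).to₂
  have hgc : Computable gfun := computable_least hdec hgex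
  have hgspec : ∀ m, m ≤ f (gfun m) := by
    intro m; exact of_decide_eq_true (Nat.find_spec (hgex m))
  have hgmin : ∀ m n, m ≤ f n → gfun m ≤ n := by
    intro m n h; exact Nat.find_min' (hgex m) (by simpa)
  have hgmono : Monotone gfun := by
    intro a b hab
    exact hgmin a _ (le_trans hab (hgspec b))
  set h' : ℕ → ℕ := fun m => gfun m / 8 with hh'
  have hordh' : IsOrder h' := by
    refine ⟨(Primrec.nat_div.comp Primrec.id (Primrec.const 8)).to_comp.comp hgc
      |>.of_eq (fun m => rfl), ?_, ?_⟩
    · intro a b hab; exact Nat.div_le_div_right (hgmono hab)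
    · intro b
      refine ⟨f (8*b) + 1, ?_⟩
      have hg : 8*b < gfun (f (8*b) + 1) := by
        by_contra hcon
        push_neg at hcon
        have h2 : f (gfun (f (8*b) + 1)) ≤ f (8*b) := hfmono hcon
        have h3 := hgspec (f (8*b) + 1)
        omega
      show b ≤ gfun (f (8*b) + 1) / 8
      rw [Nat.le_div_iff_mul_le (by norm_num)]
      omega
  obtain ⟨F, hFpr, hFmono, hFA⟩ := hB h' hordh'
  -- get a code for F
  set F' : ℕ →. ℕ := fun m =>
    Part.bind (Part.ofOption (Encodable.decode (α := List Bool × ℕ) m)) (fun p => F p.1 p.2)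
    with hF'
  have hF'p : Partrec F' :=
    Partrec.bind (Computable.decode.ofOption)
      ((hFpr.comp (Computable.fst.comp Computable.snd)
        (Computable.snd.comp Computable.snd)).to₂)
  obtain ⟨c, hc⟩ := Code.exists_code.mp (Partrec.nat_iff.mp hF'p)
  have hkey : ∀ (σ : List Bool) (j y : ℕ), y ∈ F σ j →
      y ∈ c.eval (Encodable.encode (σ, j)) := by
    intro σ j y hy
    rw [hc]
    simp only [hF', Encodable.encodek, Part.coe_some, Part.bind_some]
    exact hy
  -- the machine
  set pre : List Bool → ℕ × List Bool :=
    fun q => (f (ofBits q).unpair.1, natDecode (ofBits q).unpair.2) with hpre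
  have hprec : Computable pre := by
    refine Computable.pair ?_ ?_
    · exact hfc.comp ((Primrec.fst.comp (Primrec.unpair.comp primrec_ofBits)).to_comp)
    · exact (primrec_natDecode.comp (Primrec.snd.comp
        (Primrec.unpair.comp primrec_ofBits))).to_comp
  set chkP : ℕ × List Bool → ℕ → Bool := fun p s =>
    ((List.range p.1).map
      (fun j => (evaln s c (Encodable.encode (p.2, j))).isSome)).all (fun b => b) with hchkP
  set outP : ℕ × List Bool → ℕ → List Bool := fun p s =>
    (List.range p.1).map
      (fun j => decide ((evaln s c (Encodable.encode (p.2, j))).getD 0 = 1)) with houtP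
  have hchkPp : Primrec₂ chkP := by
    have h1 : Primrec₂ fun (x : (ℕ × List Bool) × ℕ) (j : ℕ) =>
        (evaln x.2 c (Encodable.encode (x.1.2, j))).isSome :=
      (Primrec.option_isSome.comp (primrec_evaln.comp
        ((Primrec.pair (Primrec.snd.comp Primrec.fst) (Primrec.const c)).pair
          (Primrec.encode.comp (Primrec.pair
            (Primrec.snd.comp (Primrec.fst.comp Primrec.fst))
            Primrec.snd))))).to₂
    have h2 : Primrec fun x : (ℕ × List Bool) × ℕ =>
        (List.range x.1.1).map
          (fun j => (evaln x.2 c (Encodable.encode (x.1.2, j))).isSome) :=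
      Primrec.list_map (Primrec.list_range.comp (Primrec.fst.comp Primrec.fst)) h1
    have h3 : Primrec fun l : List Bool => l.all (fun b => b) := by
      have := Primrec.list_foldr (f := @id (List Bool)) (g := fun _ => true)
        (h := fun _ p => p.1 && p.2) Primrec.id (Primrec.const true)
        ((Primrec.dom_bool₂ _).comp (Primrec.fst.comp Primrec.snd)
          (Primrec.snd.comp Primrec.snd))
      refine this.of_eq (fun l => ?_)
      show l.foldr (fun b s => b && s) true = l.all (fun b => b)
      induction l with
      | nil => rfl
      | cons b t ih => rw [List.foldr_cons, List.all_cons, ih]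
    exact (h3.comp h2).to₂
  have houtPp : Primrec₂ outP := by
    have h1 : Primrec₂ fun (x : (ℕ × List Bool) × ℕ) (j : ℕ) =>
        decide ((evaln x.2 c (Encodable.encode (x.1.2, j))).getD 0 = 1) :=
      ((Primrec.eq.comp ((Primrec.option_getD.comp (primrec_evaln.comp
        ((Primrec.pair (Primrec.snd.comp Primrec.fst) (Primrec.const c)).pair
          (Primrec.encode.comp (Primrec.pair
            (Primrec.snd.comp (Primrec.fst.comp Primrec.fst))
            Primrec.snd)))) (Primrec.const 0))) (Primrec.const 1)).decide).to₂
    exact (Primrec.list_map (Primrec.list_range.comp (Primrec.fst.comp Primrec.fst)) h1).to₂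
  set M : List Bool →. List Bool := fun q =>
    (Nat.rfind (fun s => Part.some (chkP (pre q) s))).map (fun s => outP (pre q) s) with hM
  have hMp : Partrec M := by
    apply Partrec.map
    · apply Partrec.rfind
      exact (Partrec.some.comp
        ((hchkPp.to_comp.comp (hprec.comp Computable.fst) Computable.snd).of_eq
          (fun x => rfl))).to₂
    · exact (houtPp.to_comp.comp (hprec.comp Computable.fst) Computable.snd).to₂
  obtain ⟨cM, hcM⟩ := machine_bound hU hMp
  -- good inputs
  have hgood : ∀ n, opre A (f n) ∈ M (toBits (Nat.pair n (strToNat (opre B (h' (f n)))))) := by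
    intro n
    set σ := opre B (h' (f n)) with hσ
    have hofq : ofBits (toBits (Nat.pair n (strToNat σ))) = Nat.pair n (strToNat σ) :=
      ofBits_toBits _
    have hpreq : pre (toBits (Nat.pair n (strToNat σ))) = (f n, σ) := by
      simp [hpre, hofq, Nat.unpair_pair, natDecode_strToNat]
    -- every bit halts
    have hbit : ∀ j, j < f n → natOf A j ∈ F σ j := by
      intro j hj
      exact hFmono _ _ _ _ (opre_prefix B (Nat.div_le_div_right (hgmono (le_of_lt hj))))
        (hFA j)
    have hstage : ∃ s, ∀ j < f n, (evaln s c (Encodable.encode (σ, j))).isSome := by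
      apply exists_uniform_stage c (fun j => Encodable.encode (σ, j)) (f n)
      intro j hj
      have := hkey σ j _ (hbit j hj)
      obtain ⟨s, hs⟩ := evaln_complete.mp this
      exact ⟨s, Option.isSome_iff_exists.mpr ⟨_, hs⟩⟩
    obtain ⟨sw, hsw⟩ := hstage
    have hchkw : chkP (f n, σ) sw = true := by
      simp only [hchkP, List.all_eq_true, List.mem_map, List.mem_range]
      rintro b ⟨j, hj, rfl⟩
      exact hsw j hj
    have hdom : (Nat.rfind fun s => Part.some (chkP (pre (toBits (Nat.pair n (strToNat σ)))) s)).Dom := by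
      refine Nat.rfind_dom'.mpr ⟨sw, ?_, fun {m} _ => trivial⟩
      rw [hpreq]
      simpa using hchkw
    obtain ⟨s₀, hs₀⟩ := Part.dom_iff_mem.mp hdom
    have hspec := Nat.rfind_spec hs₀
    rw [hpreq] at hspec
    have hchk₀ : chkP (f n, σ) s₀ = true := by simpa using hspec
    have hout : outP (f n, σ) s₀ = opre A (f n) := by
      simp only [houtP, opre]
      apply List.map_congr_left
      intro j hj
      rw [List.mem_range] at hj
      have hsome : (evaln s₀ c (Encodable.encode (σ, j))).isSome := by
        simp only [hchkP, List.all_eq_true, List.mem_map, List.mem_range] at hchk₀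
        exact hchk₀ _ ⟨j, hj, rfl⟩
      obtain ⟨y, hy⟩ := Option.isSome_iff_exists.mp hsome
      have hyev : y ∈ c.eval (Encodable.encode (σ, j)) := evaln_sound hy
      have hyF : y ∈ F σ j := by
        rw [hc] at hyev
        simp only [hF', Encodable.encodek, Part.coe_some, Part.bind_some] at hyev
        exact hyev
      have hyA : y = natOf A j := Part.mem_unique hyF (hbit j hj)
      rw [hy]
      simp only [Option.getD_some, hyA, natOf]
      cases hAj : A j <;> simp
    have hmem := Part.mem_map (fun s => outP (pre (toBits (Nat.pair n (strToNat σ)))) s) hs₀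
    have hout' : outP (pre (toBits (Nat.pair n (strToNat σ)))) s₀ = opre A (f n) := by
      rw [hpreq]; exact hout
    exact Part.mem_map_iff _ |>.mpr ⟨s₀, hs₀, hout'⟩
  -- complexity bound
  rw [Filter.eventually_atTop]
  refine ⟨max 40 (2*cM + 16), fun n hn => ?_⟩
  have hn40 : 40 ≤ n := le_trans (le_max_left _ _) hn
  have hncM : 2*cM + 16 ≤ n := le_trans (le_max_right _ _) hn
  set σ := opre B (h' (f n)) with hσ
  set q := toBits (Nat.pair n (strToNat σ)) with hq
  have hCle : Cplx U (opre A (f n)) ≤ q.length + cM := hcM q _ (hgood n)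
  -- bound q.length
  have hσlen : σ.length = h' (f n) := opre_length _ _
  have hh'fn : h' (f n) ≤ n / 8 := by
    have : gfun (f n) ≤ n := hgmin (f n) n le_rfl
    exact Nat.div_le_div_right this
  have hmlt : strToNat σ < 2 ^ (n/8 + 1) := by
    have := strToNat_lt σ
    rw [hσlen] at this
    have h2 : (2:ℕ) ^ (σ.length + 1) ≤ 2 ^ (n/8 + 1) := by
      rw [hσlen]
      exact Nat.pow_le_pow_right (by norm_num) (by omega)
    rw [hσlen] at h2
    omega
  have hqlen : q.length ≤ n/4 + 7 := by
    set N := Nat.pair n (strToNat σ) with hN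
    rcases Nat.eq_zero_or_pos N with hN0 | hN0
    · have hq0 : q = [] := by
        have h3 : q = toBits N := hq
        rw [h3, hN0]
        exact toBits_zero
      rw [hq0]; simp
    · have h2N : 2 ^ q.length ≤ 2 * N := two_pow_toBits_length_le N hN0
      have hk5 : 5 ≤ n/8 := by omega
      have hnle : n + 1 ≤ 2 ^ (n/8 + 1) := by
        have := aux_pow (n/8) hk5
        have h8 : n ≤ 8 * (n/8) + 7 := by omega
        have : 8 * (n/8) + 8 ≤ 2 * 2 ^ (n/8) := by omega
        rw [pow_succ]
        omega
      have hsum : n + strToNat σ + 1 ≤ 2 ^ (n/8 + 3) := by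
        have e1 : (2:ℕ) ^ (n/8+3) = 2^(n/8+1) + 2^(n/8+1) + 2^(n/8+1) + 2^(n/8+1) := by
          rw [pow_succ, pow_succ]; ring
        omega
      have hNle : N ≤ 2 ^ (2*(n/8) + 6) := by
        calc N ≤ (n + strToNat σ + 1)^2 := pair_le _ _
          _ ≤ (2 ^ (n/8 + 3))^2 := Nat.pow_le_pow_left hsum 2
          _ = 2 ^ (2*(n/8) + 6) := by rw [← pow_mul]; ring_nf
      have h2q : 2 ^ q.length ≤ 2 ^ (2*(n/8) + 7) := by
        calc 2 ^ q.length ≤ 2 * N := h2N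
          _ ≤ 2 * 2 ^ (2*(n/8) + 6) := by omega
          _ = 2 ^ (2*(n/8) + 7) := by rw [pow_succ]; ring
      have hqle : q.length ≤ 2*(n/8) + 7 :=
        (Nat.pow_le_pow_iff_right (by norm_num)).mp h2q
      have h84 : 2*(n/8) ≤ n/4 := by omega
      omega
  omega

end Arc12

section Arc34

lemma cplx_append_bit {U : List Bool →. List Bool} (hU : Optimal U) :
    ∃ c2, ∀ (x : List Bool) (b : Bool), Cplx U (x ++ [b]) ≤ Cplx U x + 1 + c2 := by
  have hM2 : Partrec (fun q : List Bool =>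
      (U (q.reverse.tail.reverse)).map (fun x => x ++ [q.reverse.getD 0 false])) := by
    apply Partrec.map
    · exact hU.1.comp ((Primrec.list_reverse.comp (Primrec.list_tail.comp
        Primrec.list_reverse)).to_comp)
    · exact ((Primrec.list_append.comp Primrec.snd
        (Primrec.list_cons.comp ((Primrec.list_getD false).comp
          (Primrec.list_reverse.comp Primrec.fst) (Primrec.const 0))
          (Primrec.const []))).to_comp).to₂
  obtain ⟨c2, hc2⟩ := machine_bound hU hM2
  refine ⟨c2, fun x b => ?_⟩
  obtain ⟨p, hp, hpx⟩ := cplx_spec hU x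
  have hmem : x ++ [b] ∈ (U ((p ++ [b]).reverse.tail.reverse)).map
      (fun y => y ++ [(p ++ [b]).reverse.getD 0 false]) := by
    have h1 : (p ++ [b]).reverse.tail.reverse = p := by simp
    have h2 : (p ++ [b]).reverse.getD 0 false = b := by simp
    rw [h1, h2]
    exact Part.mem_map_iff _ |>.mpr ⟨x, hpx, rfl⟩
  have := hc2 (p ++ [b]) (x ++ [b]) hmem
  simp only [List.length_append, List.length_cons, List.length_nil, hp] at this
  omega

lemma cplx_gA_le {U : List Bool →. List Bool} (hU : Optimal U) (A : ℕ → Bool) :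
    ∃ c1, ∀ k, Cplx U (opre A (gA U A k)) ≤ k + c1 := by
  obtain ⟨c2, hc2⟩ := cplx_append_bit hU
  refine ⟨1 + c2 + Cplx U [], fun k => ?_⟩
  rcases Nat.eq_zero_or_pos (gA U A k) with h0 | hpos
  · rw [h0]
    have : opre A 0 = [] := rfl
    rw [this]
    omega
  · obtain ⟨t, ht⟩ := Nat.exists_eq_succ_of_ne_zero hpos.ne'
    have hsucc : opre A (gA U A k) = opre A t ++ [A t] := by rw [ht]; exact opre_succ A t
    have hpred := gA_pred hU A hpos.ne'
    have ht' : gA U A k - 1 = t := by omega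
    rw [ht'] at hpred
    calc Cplx U (opre A (gA U A k)) = Cplx U (opre A t ++ [A t]) := by rw [hsucc]
      _ ≤ Cplx U (opre A t) + 1 + c2 := hc2 _ _
      _ ≤ k + (1 + c2 + Cplx U []) := by omega

def truePos (σ : List Bool) : List ℕ :=
  (List.range σ.length).filterMap (fun i => cond (σ.getD i false) (some i) none)

lemma primrec_truePos : Primrec truePos := by
  apply Primrec.listFilterMap (Primrec.list_range.comp Primrec.list_length)
  exact (Primrec.cond ((Primrec.list_getD false).comp Primrec.fst Primrec.snd)
    (Primrec.option_some.comp Primrec.snd) (Primrec.const none)).to₂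

lemma truePos_mem {σ : List Bool} {i : ℕ} :
    i ∈ truePos σ ↔ i < σ.length ∧ σ.getD i false = true := by
  simp only [truePos, List.mem_filterMap, List.mem_range]
  constructor
  · rintro ⟨a, ha, hc⟩
    cases hg : σ.getD a false
    · rw [hg] at hc; simp at hc
    · rw [hg] at hc; simp at hc; subst hc; exact ⟨ha, hg⟩
  · rintro ⟨hi, hg⟩
    exact ⟨i, hi, by rw [hg]; rfl⟩

lemma truePos_prefix {σ τ : List Bool} (h : σ <+: τ) :
    ∃ t, truePos τ = truePos σ ++ t := by
  obtain ⟨r, rfl⟩ := h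
  have hlen : σ.length ≤ (σ ++ r).length := by simp
  have hpre : List.range σ.length <+: List.range (σ ++ r).length := by
    have : List.range σ.length = (List.range (σ ++ r).length).take σ.length := by
      rw [List.take_range, min_eq_left hlen]
    rw [this]
    exact List.take_prefix _ _
  obtain ⟨rest, hrest⟩ := hpre
  refine ⟨rest.filterMap (fun i => cond ((σ ++ r).getD i false) (some i) none), ?_⟩
  rw [truePos, ← hrest, List.filterMap_append]
  congr 1
  rw [truePos]
  apply List.filterMap_congr
  intro i hi
  rw [List.mem_range] at hi
  rw [List.getD_append _ _ _ _ hi]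

def stepL (U : List Bool →. List Bool) : ℕ × List ℕ →. ℕ ⊕ (ℕ × List ℕ) := fun a =>
  (Part.ofOption a.2.head?).bind fun m =>
    (U (natDecode m)).map fun x =>
      if a.1 < x.length then Sum.inl (cond (x.getD a.1 false) 1 0)
      else Sum.inr (a.1, a.2.tail)

lemma stepL_partrec {U : List Bool →. List Bool} (hUp : Partrec U) : Partrec (stepL U) := by
  have hpost : Primrec fun (y : ((ℕ × List ℕ) × ℕ) × List Bool) =>
      if y.1.1.1 < y.2.length then Sum.inl (cond (y.2.getD y.1.1.1 false) 1 0)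
      else (Sum.inr (y.1.1.1, y.1.1.2.tail) : ℕ ⊕ (ℕ × List ℕ)) := by
    apply Primrec.ite
    · exact Primrec.nat_lt.comp (Primrec.fst.comp (Primrec.fst.comp Primrec.fst))
        (Primrec.list_length.comp Primrec.snd)
    · exact Primrec.sumInl.comp (Primrec.cond
        ((Primrec.list_getD false).comp Primrec.snd
          (Primrec.fst.comp (Primrec.fst.comp Primrec.fst)))
        (Primrec.const 1) (Primrec.const 0))
    · exact Primrec.sumInr.comp (Primrec.pair
        (Primrec.fst.comp (Primrec.fst.comp Primrec.fst))
        (Primrec.list_tail.comp (Primrec.snd.comp (Primrec.fst.comp Primrec.fst))))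
  have hinner : Partrec fun (p : (ℕ × List ℕ) × ℕ) =>
      (U (natDecode p.2)).map fun x =>
        if p.1.1 < x.length then Sum.inl (cond (x.getD p.1.1 false) 1 0)
        else Sum.inr (p.1.1, p.1.2.tail) := by
    apply Partrec.map
    · exact hUp.comp ((primrec_natDecode.comp Primrec.snd).to_comp)
    · exact (hpost.to_comp).to₂
  exact Partrec.bind
    (Computable.ofOption ((Primrec.list_head?.comp Primrec.snd).to_comp)) hinner.to₂

lemma loop_append {U : List Bool →. List Bool} {n y : ℕ} {l : List ℕ} (t : List ℕ)
    (h : y ∈ PFun.fix (stepL U) (n, l)) : y ∈ PFun.fix (stepL U) (n, l ++ t) := by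
  have main : ∀ a : ℕ × List ℕ, y ∈ PFun.fix (stepL U) a →
      y ∈ PFun.fix (stepL U) (a.1, a.2 ++ t) := by
    intro a ha
    refine PFun.fixInduction
      (C := fun b => y ∈ PFun.fix (stepL U) (b.1, b.2 ++ t)) ha ?_
    intro a' ha' IH
    rcases PFun.mem_fix_iff.mp ha' with hinl | ⟨a'', hinr, hfix⟩
    · -- direct output
      obtain ⟨m, hm, hmap⟩ := Part.mem_bind_iff.mp hinl
      rw [Part.mem_ofOption] at hm
      cases hl' : a'.2 with
      | nil => rw [hl'] at hm; simp at hm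
      | cons m₀ t₀ =>
        rw [hl'] at hm
        simp only [List.head?_cons, Option.mem_some_iff] at hm
        subst hm
        obtain ⟨x, hx, hite⟩ := (Part.mem_map_iff _).mp hmap
        apply PFun.mem_fix_iff.mpr
        left
        apply Part.mem_bind_iff.mpr
        refine ⟨m₀, ?_, ?_⟩
        · simp [Part.mem_ofOption]
        · apply (Part.mem_map_iff _).mpr
          refine ⟨x, hx, ?_⟩
          by_cases hc : a'.1 < x.length
          · rw [if_pos hc] at hite ⊢; exact hite
          · rw [if_neg hc] at hite; exact absurd hite (by simp)
    · -- step to tail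
      obtain ⟨m, hm, hmap⟩ := Part.mem_bind_iff.mp hinr
      rw [Part.mem_ofOption] at hm
      cases hl' : a'.2 with
      | nil => rw [hl'] at hm; simp at hm
      | cons m₀ t₀ =>
        rw [hl'] at hm
        simp only [List.head?_cons, Option.mem_some_iff] at hm
        subst hm
        obtain ⟨x, hx, hite⟩ := (Part.mem_map_iff _).mp hmap
        have hc : ¬ a'.1 < x.length := by
          by_contra hc
          rw [if_pos hc] at hite
          exact absurd hite (by simp)
        rw [if_neg hc] at hite
        have ha'' : a'' = (a'.1, t₀) := by
          have heq := Sum.inr.inj hite.symm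
          rw [heq, hl']
          rfl
        have hIH := IH a'' hinr
        rw [ha''] at hIH
        apply PFun.mem_fix_iff.mpr
        right
        refine ⟨(a'.1, t₀ ++ t), ?_, hIH⟩
        apply Part.mem_bind_iff.mpr
        refine ⟨m₀, ?_, ?_⟩
        · simp [Part.mem_ofOption]
        · apply (Part.mem_map_iff _).mpr
          refine ⟨x, hx, ?_⟩
          rw [if_neg hc]
          rfl
  exact main (n, l) h

lemma loop_run {U : List Bool →. List Bool} (A : ℕ → Bool) (n : ℕ) :
    ∀ l : List ℕ,
    (∀ m ∈ l, ∃ km, opre A (gA U A km) ∈ U (natDecode m)) →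
    (∃ m ∈ l, ∃ km, opre A (gA U A km) ∈ U (natDecode m) ∧ n < gA U A km) →
    natOf A n ∈ PFun.fix (stepL U) (n, l) := by
  intro l
  induction l with
  | nil =>
    rintro _ ⟨m, hm, _⟩
    exact absurd hm List.not_mem_nil
  | cons m t ih =>
    intro H1 H2
    obtain ⟨km, hx⟩ := H1 m List.mem_cons_self
    by_cases hlen : n < gA U A km
    · apply PFun.mem_fix_iff.mpr
      left
      apply Part.mem_bind_iff.mpr
      refine ⟨m, by simp [Part.mem_ofOption], ?_⟩
      apply (Part.mem_map_iff _).mpr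
      refine ⟨opre A (gA U A km), hx, ?_⟩
      have hlt : n < (opre A (gA U A km)).length := by rw [opre_length]; exact hlen
      rw [if_pos hlt, opre_getD A hlen]
      rfl
    · obtain ⟨m₀, hm₀mem, km₀, hx₀, hlen₀⟩ := H2
      rcases List.mem_cons.mp hm₀mem with heq | hmem
      · exfalso
        subst heq
        have hxeq : opre A (gA U A km₀) = opre A (gA U A km) := Part.mem_unique hx₀ hx
        have := congrArg List.length hxeq
        rw [opre_length, opre_length] at this
        omega
      · apply PFun.mem_fix_iff.mpr
        right
        refine ⟨(n, t), ?_, ih (fun m' hm' => H1 m' (List.mem_cons_of_mem _ hm'))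
          ⟨m₀, hmem, km₀, hx₀, hlen₀⟩⟩
        apply Part.mem_bind_iff.mpr
        refine ⟨m, by simp [Part.mem_ofOption], ?_⟩
        apply (Part.mem_map_iff _).mpr
        refine ⟨opre A (gA U A km), hx, ?_⟩
        have hlt : ¬ n < (opre A (gA U A km)).length := by rw [opre_length]; exact hlen
        rw [if_neg hlt]
        rfl

lemma primrec_two_pow : Primrec fun m : ℕ => 2^m := by
  have h := Primrec.nat_rec₁ (f := fun _ ih => 2*ih) 1
    ((Primrec.nat_double.comp Primrec.snd).to₂)
  apply h.of_eq
  intro m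
  induction m with
  | zero => rfl
  | succ m ih =>
    show 2 * (Nat.rec 1 (fun _ ih => 2*ih) m) = 2^(m+1)
    rw [ih, pow_succ]
    ring

lemma arc34 {U : List Bool →. List Bool} (hU : Optimal U) (A : ℕ → Bool)
    (hdom : Dominant (gA U A)) : UTtuRed A (Astar U A) := by
  obtain ⟨c1, hc1⟩ := cplx_gA_le hU A
  have kex : ∀ n, ∃ k, n < gA U A k := gA_unbounded hU A
  set kf : ℕ → ℕ := fun n => Nat.find (kex n) with hkf
  have hkspec : ∀ n, n < gA U A (kf n) := fun n => Nat.find_spec (kex n)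
  have hkmin : ∀ n j, j < kf n → gA U A j ≤ n := by
    intro n j hj
    have := Nat.find_min (kex n) hj
    omega
  set u : ℕ → ℕ := fun n => 2^(kf n + c1 + 1) with hu
  refine ⟨u, ?_, ?_⟩
  · -- domination
    intro h hord
    obtain ⟨hhc, hhmono, hhunb⟩ := hord
    have f0ex : ∀ k, ∃ n, decide (2^(k+c1+2) ≤ h n) = true := by
      intro k
      obtain ⟨n, hn⟩ := hhunb (2^(k+c1+2))
      exact ⟨n, by simpa⟩
    set f0 : ℕ → ℕ := fun k => Nat.find (f0ex k) with hf0
    have hdec2 : Computable₂ fun k n => decide (2^(k+c1+2) ≤ h n) := by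
      have hle : Computable₂ fun (a b : ℕ) => decide (a ≤ b) := Primrec.nat_le.decide.to_comp
      exact (hle.comp
        ((primrec_two_pow.comp (Primrec.nat_add.comp Primrec.id
          (Primrec.const (c1+2)))).to_comp.comp Computable.fst)
        (hhc.comp Computable.snd)).to₂
    have hf0c : Computable f0 := computable_least hdec2 f0ex
    have hf0spec : ∀ k, 2^(k+c1+2) ≤ h (f0 k) := by
      intro k
      exact of_decide_eq_true (Nat.find_spec (f0ex k))
    obtain ⟨K, hK⟩ := Filter.eventually_atTop.mp (hdom f0 hf0c)
    obtain ⟨n₁, hn₁⟩ := hhunb (2^(K + c1 + 1))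
    rw [Filter.eventually_atTop]
    refine ⟨n₁, fun n hn => ?_⟩
    rcases Nat.lt_or_ge (kf n) (K+1) with hk | hk
    · calc u n = 2^(kf n + c1 + 1) := rfl
        _ ≤ 2^(K + c1 + 1) := Nat.pow_le_pow_right (by norm_num) (by omega)
        _ ≤ h n₁ := hn₁
        _ ≤ h n := hhmono hn
    · have hkm : gA U A (kf n - 1) ≤ n := hkmin n _ (by omega)
      have hf0le : f0 (kf n - 1) ≤ gA U A (kf n - 1) := hK _ (by omega)
      have hexp : kf n - 1 + c1 + 2 = kf n + c1 + 1 := by omega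
      calc u n = 2^(kf n - 1 + c1 + 2) := by rw [hexp]
        _ ≤ h (f0 (kf n - 1)) := hf0spec _
        _ ≤ h n := hhmono (le_trans hf0le hkm)
  · -- the reduction
    refine ⟨fun σ n => PFun.fix (stepL U) (n, truePos σ), ?_, ?_, ?_⟩
    · exact ((Partrec.fix (stepL_partrec hU.1)).comp
        (Computable.pair Computable.snd
          ((primrec_truePos.comp Primrec.fst).to_comp))).to₂
    · intro σ τ n y hpre hy
      obtain ⟨t, ht⟩ := truePos_prefix hpre
      show y ∈ PFun.fix (stepL U) (n, truePos τ)
      rw [ht]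
      exact loop_append t hy
    · intro n
      apply loop_run A n
      · intro m hm
        rw [truePos_mem] at hm
        obtain ⟨hmlt, hmtrue⟩ := hm
        rw [opre_length] at hmlt
        rw [opre_getD _ hmlt] at hmtrue
        have hex : ∃ k, m = leastDesc U (opre A (gA U A k)) := of_decide_eq_true hmtrue
        obtain ⟨k, hk⟩ := hex
        obtain ⟨p, hp, hpx⟩ := leastDesc_spec hU (opre A (gA U A k))
        refine ⟨k, ?_⟩
        rw [hk, ← hp, natDecode_strToNat]
        exact hpx
      · have hm0lt : leastDesc U (opre A (gA U A (kf n))) < u n := by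
          have h1 := leastDesc_lt hU (opre A (gA U A (kf n)))
          have h2 : (2:ℕ) ^ (Cplx U (opre A (gA U A (kf n))) + 1) ≤ 2 ^ (kf n + c1 + 1) :=
            Nat.pow_le_pow_right (by norm_num) (by have := hc1 (kf n); omega)
          exact lt_of_lt_of_le h1 h2
        refine ⟨leastDesc U (opre A (gA U A (kf n))), ?_, kf n, ?_, hkspec n⟩
        · rw [truePos_mem, opre_length]
          refine ⟨hm0lt, ?_⟩
          rw [opre_getD _ hm0lt]
          exact decide_eq_true ⟨kf n, rfl⟩
        · obtain ⟨p, hp, hpx⟩ := leastDesc_spec hU (opre A (gA U A (kf n)))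
          rw [← hp, natDecode_strToNat]
          exact hpx

end Arc34

theorem stmt15 (U : List Bool →. List Bool) (hU : Optimal U) (A : ℕ → Bool) :
    List.TFAE [∃ B, TtuRed A B, AntiComplex U A, Dominant (gA U A),
      UTtuRed A (Astar U A)] := by
  tfae_have 1 → 2 := fun h => arc12 hU A h
  tfae_have 2 → 3 := fun h => arc23 hU A h
  tfae_have 3 → 4 := fun h => arc34 hU A h
  tfae_have 4 → 1 := fun h => ⟨Astar U A, arc41 A (Astar U A) h⟩
  tfae_finish
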